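/- Brunn–Minkowski inequality in the plane: if A and B are nonempty compact (or measurable with measurable sum) subsets of ℝ², then (Area(A + B))^{1/2} ≥ (Area A)^{1/2} + (Area B)^{1/2}. -/

import Mathlib

open MvPolynomial MeasureTheory Pointwise

noncomputable section

/-- Polynomials in two complex variables. -/
abbrev P2 := MvPolynomial (Fin 2) ℂ

/-- The `w`-weight of a monomial exponent. -/
def wt (w : ℝ × ℝ) (m : Fin 2 →₀ ℕ) : ℝ := w.1 * (m 0 : ℝ) + w.2 * (m 1 : ℝ)

/-- `d_w(f)`: maximal `w`-weight of a monomial of `f`. -/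
def dw (w : ℝ × ℝ) (f : P2) : ℝ := sSup (wt w '' (f.support : Set (Fin 2 →₀ ℕ)))

open Classical in
/-- The initial form `init(f, w)`: sum of the monomials of `f` of maximal `w`-weight. -/
def initForm (w : ℝ × ℝ) (f : P2) : P2 :=
  ∑ m ∈ f.support, if wt w m = dw w f then monomial m (f.coeff m) else 0

/-- `f` is quasi-convenient: some pure power of `X` and some pure power of `Y`
occur in `f` with nonzero coefficient. -/
def QuasiConvenient (f : P2) : Prop :=
  (∃ a : ℕ, f.coeff (Finsupp.single 0 a) ≠ 0) ∧
  (∃ b : ℕ, f.coeff (Finsupp.single 1 b) ≠ 0)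

/-- The Newton diagram at infinity `Δ∞(f)`. -/
def newton (f : P2) : Set (ℝ × ℝ) :=
  convexHull ℝ ({(0, 0)} ∪ {p : ℝ × ℝ | ∃ m ∈ f.support, p = ((m 0 : ℝ), (m 1 : ℝ))})

/-- Area (2-dimensional Lebesgue measure) of a plane set. -/
def area (S : Set (ℝ × ℝ)) : ℝ := (volume S).toReal

/-- `ν∞(f, g)`. -/
def nuInf (f g : P2) : ℝ := area (newton (f * g)) - area (newton f) - area (newton g)

/-- `f` is nondegenerate at infinity. -/
def NondegAtInf (f : P2) : Prop :=
  ∀ w : ℝ × ℝ, (0 < w.1 ∨ 0 < w.2) →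
    ¬ ∃ x y : ℂ, x ≠ 0 ∧ y ≠ 0 ∧
      eval ![x, y] (initForm w f) = 0 ∧
      eval ![x, y] (pderiv 0 (initForm w f)) = 0 ∧
      eval ![x, y] (pderiv 1 (initForm w f)) = 0

/-- The pair `(f, g)` is nondegenerate at infinity. -/
def PairNondegAtInf (f g : P2) : Prop :=
  ∀ w : ℝ × ℝ, (0 < w.1 ∨ 0 < w.2) →
    ¬ ∃ x y : ℂ, x ≠ 0 ∧ y ≠ 0 ∧
      eval ![x, y] (initForm w f) = 0 ∧ eval ![x, y] (initForm w g) = 0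

/-- `g` and `h` have no common nonunit factor. -/
def CoprimeDiv (g h : P2) : Prop := ∀ d : P2, d ∣ g → d ∣ h → IsUnit d

/-- `f` is nearly irreducible: positive degree, and any two nonconstant factors
have a common zero in `ℂ²`. -/
def NearlyIrreducible (f : P2) : Prop :=
  0 < f.totalDegree ∧
  ∀ g h : P2, g ∣ f → h ∣ f → 0 < g.totalDegree → 0 < h.totalDegree →
    ∃ x y : ℂ, eval ![x, y] g = 0 ∧ eval ![x, y] h = 0

/-- The maximal ideal of polynomials vanishing at a point `P ∈ ℂ²`. -/
def mIdeal (Pt : ℂ × ℂ) : Ideal P2 := RingHom.ker (eval ![Pt.1, Pt.2] : P2 →+* ℂ)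

instance (Pt : ℂ × ℂ) : (mIdeal Pt).IsPrime := RingHom.ker_isPrime _

/-- Intersection multiplicity `(f, g)_P`: the `ℂ`-dimension of the quotient of the
local ring of `ℂ²` at `P` by the ideal generated by `f` and `g`. -/
def interMult (f g : P2) (Pt : ℂ × ℂ) : ℕ :=
  Module.finrank ℂ
    (Localization.AtPrime (mIdeal Pt) ⧸
      Ideal.span {algebraMap P2 (Localization.AtPrime (mIdeal Pt)) f,
                  algebraMap P2 (Localization.AtPrime (mIdeal Pt)) g})


section BMaux
open Set
open scoped ENNReal NNReal

theorem bm1 (K L : Set ℝ) (hK : K.Nonempty) (hL : L.Nonempty) (cK : IsCompact K) (cL : IsCompact L) :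
    volume K + volume L ≤ volume (K + L) := by
  set x := sSup K with hx
  set y := sInf L with hy
  have hxK : x ∈ K := cK.sSup_mem hK
  have hyL : y ∈ L := cL.sInf_mem hL
  set U : Set ℝ := ((y + ·) '' K) \ {x + y} with hU
  set V : Set ℝ := ((x + ·) '' L) with hV
  have hUV : Disjoint U V := by
    rw [Set.disjoint_left]
    rintro a ⟨⟨k, hk, rfl⟩, hne⟩ ⟨l, hl, hlv⟩
    have h1 : y + k ≤ x + y := by
      have := le_csSup cK.bddAbove hk; linarith [hx ▸ this]
    have h2 : x + y ≤ x + l := by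
      have := csInf_le cL.bddBelow hl; linarith
    have h3 : x + l = y + k := hlv
    have : y + k = x + y := le_antisymm h1 (by linarith)
    exact hne (by simpa using this)
  have hVm : MeasurableSet V := ((Homeomorph.addLeft x).isClosed_image.2 cL.isClosed).measurableSet
  have hsub : U ∪ V ⊆ K + L := by
    rintro a (⟨⟨k, hk, rfl⟩, -⟩ | ⟨l, hl, rfl⟩)
    · exact ⟨k, hk, y, hyL, by ring⟩
    · exact ⟨x, hxK, l, hl, by ring⟩
  have hUvol : volume U = volume K := by
    rw [hU, measure_diff_null (measure_singleton _)]
    have : (y + ·) '' K = y +ᵥ K := rfl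
    rw [this, measure_vadd]
  have hVvol : volume V = volume L := by
    have : (x + ·) '' L = x +ᵥ L := rfl
    rw [hV, this, measure_vadd]
  calc volume K + volume L = volume U + volume V := by rw [hUvol, hVvol]
    _ = volume (U ∪ V) := (measure_union hUV hVm).symm
    _ ≤ volume (K + L) := measure_mono hsub

theorem volume_smul_real (a : ℝ) (s : Set ℝ) : volume (a • s) = ENNReal.ofReal |a| * volume s := by
  rw [Measure.addHaar_smul]; simp

theorem bm1_scaled {α β : ℝ} (hα : 0 < α) (hβ : 0 < β) {F G W : Set ℝ}
    (hF : F.Nonempty) (hG : G.Nonempty) (mF : MeasurableSet F) (mG : MeasurableSet G)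
    (fF : volume F ≠ ⊤) (fG : volume G ≠ ⊤) (hW : α • F + β • G ⊆ W) :
    ENNReal.ofReal α * volume F + ENNReal.ofReal β * volume G ≤ volume W := by
  have hα' : ENNReal.ofReal α ≠ 0 := by simp [ENNReal.ofReal_eq_zero, not_le, hα]
  have hβ' : ENNReal.ofReal β ≠ 0 := by simp [ENNReal.ofReal_eq_zero, not_le, hβ]
  refine ENNReal.le_of_forall_pos_le_add (fun ε hε _ => ?_)
  have hε' : (ε : ℝ≥0∞) ≠ 0 := by exact_mod_cast hε.ne'
  have key : ∀ (S : Set ℝ) (γ : ℝ), 0 < γ → S.Nonempty → MeasurableSet S → volume S ≠ ⊤ →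
      ∃ K ⊆ S, IsCompact K ∧ K.Nonempty ∧
        ENNReal.ofReal γ * volume S ≤ ENNReal.ofReal γ * volume K + ε / 2 := by
    intro S γ hγ hS mS fS
    have hγ' : ENNReal.ofReal γ ≠ 0 := by simp [ENNReal.ofReal_eq_zero, not_le, hγ]
    set δ : ℝ≥0∞ := ε / 2 / ENNReal.ofReal γ with hδ
    have hδ0 : δ ≠ 0 := by
      simp [hδ, ENNReal.div_eq_zero_iff, hε', ENNReal.ofReal_ne_top]
    obtain ⟨K, hKS, cK, hKv⟩ := mS.exists_isCompact_lt_add fS hδ0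
    obtain ⟨p, hp⟩ := hS
    refine ⟨insert p K, insert_subset hp hKS, cK.insert p, insert_nonempty _ _, ?_⟩
    have h1 : volume S ≤ volume (insert p K) + δ :=
      le_trans hKv.le (add_le_add_left (measure_mono (subset_insert _ _)) _)
    calc ENNReal.ofReal γ * volume S ≤ ENNReal.ofReal γ * (volume (insert p K) + δ) :=
          mul_le_mul_right h1 _
      _ = ENNReal.ofReal γ * volume (insert p K) + ENNReal.ofReal γ * δ := by ring
      _ ≤ ENNReal.ofReal γ * volume (insert p K) + ε / 2 := by
          refine add_le_add_right ?_ _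
          rw [hδ, ENNReal.mul_div_cancel hγ' ENNReal.ofReal_ne_top]
  obtain ⟨K, hKF, cK, hKne, hKv⟩ := key F α hα hF mF fF
  obtain ⟨L, hLG, cL, hLne, hLv⟩ := key G β hβ hG mG fG
  have hsub : α • K + β • L ⊆ W :=
    (Set.add_subset_add (smul_set_mono hKF) (smul_set_mono hLG)).trans hW
  have h2 := bm1 (α • K) (β • L) (hKne.smul_set) (hLne.smul_set) (cK.smul α) (cL.smul β)
  rw [volume_smul_real, volume_smul_real, abs_of_pos hα, abs_of_pos hβ] at h2
  calc ENNReal.ofReal α * volume F + ENNReal.ofReal β * volume G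
      ≤ (ENNReal.ofReal α * volume K + ε/2) + (ENNReal.ofReal β * volume L + ε/2) :=
        add_le_add hKv hLv
    _ = (ENNReal.ofReal α * volume K + ENNReal.ofReal β * volume L) + ε := by
        rw [add_add_add_comm, ENNReal.add_halves]
    _ ≤ volume (α • K + β • L) + ε := add_le_add_left h2 _
    _ ≤ volume W + ε := add_le_add_left (measure_mono hsub) _

theorem layercake (f : ℝ → ℝ≥0∞) (mf : Measurable f) (hf : ∫⁻ x, f x ≠ ⊤) :
    ∫⁻ x, f x = ∫⁻ t in Set.Ioi (0:ℝ), volume {x | ENNReal.ofReal t ≤ f x} := by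
  have hae : ∀ᵐ x, f x < ⊤ := ae_lt_top mf hf
  set φ : ℝ → ℝ := fun x => (f x).toReal with hφ
  have h1 : ∫⁻ x, f x = ∫⁻ x, ENNReal.ofReal (φ x) := by
    refine lintegral_congr_ae ?_
    filter_upwards [hae] with x hx
    rw [hφ, ENNReal.ofReal_toReal hx.ne]
  have h2 := lintegral_eq_lintegral_meas_le volume
    (Filter.Eventually.of_forall (fun x => ENNReal.toReal_nonneg : ∀ x, 0 ≤ φ x))
    mf.ennreal_toReal.aemeasurable
  rw [h1, h2]
  refine lintegral_congr (fun t => ?_)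
  refine measure_congr ?_
  rw [Filter.eventuallyEq_set]
  filter_upwards [hae] with x hx
  exact (ENNReal.ofReal_le_iff_le_toReal hx.ne).symm

theorem amgm2 {l : ℝ} (hl0 : 0 < l) (hl1 : l < 1) (a b : ℝ≥0∞) (ha : a ≠ ⊤) (hb : b ≠ ⊤) :
    a ^ (1 - l) * b ^ l ≤ ENNReal.ofReal (1 - l) * a + ENNReal.ofReal l * b := by
  lift a to ℝ≥0 using ha
  lift b to ℝ≥0 using hb
  have hsum : (1 - l).toNNReal + l.toNNReal = 1 := by
    rw [← Real.toNNReal_add (by linarith) hl0.le]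
    simp
  have key := NNReal.geom_mean_le_arith_mean2_weighted (1-l).toNNReal l.toNNReal a b hsum
  have e1 : ((1 - l).toNNReal : ℝ) = 1 - l := Real.coe_toNNReal _ (by linarith)
  have e2 : (l.toNNReal : ℝ) = l := Real.coe_toNNReal _ hl0.le
  rw [e1, e2] at key
  calc (a:ℝ≥0∞) ^ (1-l) * (b:ℝ≥0∞) ^ l
      = ((a ^ (1-l) * b ^ l : ℝ≥0) : ℝ≥0∞) := by
        rw [ENNReal.coe_mul, ENNReal.coe_rpow_of_nonneg _ (by linarith : (0:ℝ) ≤ 1 - l),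
          ENNReal.coe_rpow_of_nonneg _ hl0.le]
    _ ≤ (((1-l).toNNReal * a + l.toNNReal * b : ℝ≥0) : ℝ≥0∞) := by exact_mod_cast key
    _ = ENNReal.ofReal (1 - l) * a + ENNReal.ofReal l * b := by
        rw [ENNReal.coe_add, ENNReal.coe_mul, ENNReal.coe_mul]
        rfl

theorem pl1 {l : ℝ} (hl0 : 0 < l) (hl1 : l < 1) (f g h : ℝ → ℝ≥0∞)
    (mf : Measurable f) (mg : Measurable g) (mh : Measurable h)
    (hsf : (⨆ x, f x) ≠ ⊤) (hsg : (⨆ x, g x) ≠ ⊤)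
    (hif : ∫⁻ x, f x ≠ ⊤) (hig : ∫⁻ x, g x ≠ ⊤)
    (hyp : ∀ x y : ℝ, f x ^ (1-l) * g y ^ l ≤ h ((1-l)*x + l*y)) :
    (∫⁻ x, f x) ^ (1-l) * (∫⁻ x, g x) ^ l ≤ ∫⁻ x, h x := by
  have h1l : (0:ℝ) < 1 - l := by linarith
  by_cases hF0 : ∫⁻ x, f x = 0
  · rw [hF0, ENNReal.zero_rpow_of_pos h1l, zero_mul]; exact zero_le
  by_cases hG0 : ∫⁻ x, g x = 0
  · rw [hG0, ENNReal.zero_rpow_of_pos hl0, mul_zero]; exact zero_le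
  by_cases hiH : ∫⁻ x, h x = ⊤
  · rw [hiH]; exact le_top
  set c := ⨆ x, f x with hc
  set d := ⨆ x, g x with hd
  have hc0 : c ≠ 0 := by
    intro h0
    refine hF0 ?_
    have hz : ∀ x, f x = 0 := fun x => le_antisymm (h0 ▸ le_iSup f x) zero_le
    simp [hz]
  have hd0 : d ≠ 0 := by
    intro h0
    refine hG0 ?_
    have hz : ∀ x, g x = 0 := fun x => le_antisymm (h0 ▸ le_iSup g x) zero_le
    simp [hz]
  set C := c ^ (1-l) * d ^ l with hC
  have hcl0 : c ^ (1-l) ≠ 0 := by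
    simp [ENNReal.rpow_eq_zero_iff, hc0, hsf, not_lt.2 h1l.le, not_lt.2 hl0.le]
  have hdl0 : d ^ l ≠ 0 := by
    simp [ENNReal.rpow_eq_zero_iff, hd0, hsg, not_lt.2 h1l.le, not_lt.2 hl0.le]
  have hclt : c ^ (1-l) ≠ ⊤ := ENNReal.rpow_ne_top_of_nonneg h1l.le hsf
  have hdlt : d ^ l ≠ ⊤ := ENNReal.rpow_ne_top_of_nonneg hl0.le hsg
  have hC0 : C ≠ 0 := mul_ne_zero hcl0 hdl0
  have hCt : C ≠ ⊤ := ENNReal.mul_ne_top hclt hdlt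
  set f' : ℝ → ℝ≥0∞ := fun x => f x / c with hf'
  set g' : ℝ → ℝ≥0∞ := fun x => g x / d with hg'
  set h' : ℝ → ℝ≥0∞ := fun x => h x / C with hh'
  have mf' : Measurable f' := mf.div_const c
  have mg' : Measurable g' := mg.div_const d
  have mh' : Measurable h' := mh.div_const C
  have if' : ∫⁻ x, f' x = (∫⁻ x, f x) / c := by
    simp only [hf', div_eq_mul_inv]
    exact lintegral_mul_const' c⁻¹ f (by simp [hc0])
  have ig' : ∫⁻ x, g' x = (∫⁻ x, g x) / d := by
    simp only [hg', div_eq_mul_inv]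
    exact lintegral_mul_const' d⁻¹ g (by simp [hd0])
  have ih' : ∫⁻ x, h' x = (∫⁻ x, h x) / C := by
    simp only [hh', div_eq_mul_inv]
    exact lintegral_mul_const' C⁻¹ h (by simp [hC0])
  have fif' : ∫⁻ x, f' x ≠ ⊤ := by
    rw [if']; exact (ENNReal.div_lt_top hif hc0).ne
  have fig' : ∫⁻ x, g' x ≠ ⊤ := by
    rw [ig']; exact (ENNReal.div_lt_top hig hd0).ne
  have fih' : ∫⁻ x, h' x ≠ ⊤ := by
    rw [ih']; exact (ENNReal.div_lt_top hiH hC0).ne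
  -- the key superlevel-set inequality
  have key : ∀ t : ℝ, 0 < t → t ≠ 1 →
      ENNReal.ofReal (1-l) * volume {x | ENNReal.ofReal t ≤ f' x}
        + ENNReal.ofReal l * volume {x | ENNReal.ofReal t ≤ g' x}
      ≤ volume {x | ENNReal.ofReal t ≤ h' x} := by
    intro t ht hne
    set T := ENNReal.ofReal t with hT
    have hT0 : T ≠ 0 := by simp [hT, ENNReal.ofReal_eq_zero, not_le, ht]
    have hTt : T ≠ ⊤ := ENNReal.ofReal_ne_top
    have ef : {x | T ≤ f' x} = {x | T * c ≤ f x} := by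
      ext x; exact ENNReal.le_div_iff_mul_le (Or.inl hc0) (Or.inl hsf)
    have eg : {x | T ≤ g' x} = {x | T * d ≤ g x} := by
      ext x; exact ENNReal.le_div_iff_mul_le (Or.inl hd0) (Or.inl hsg)
    have eh : {x | T ≤ h' x} = {x | T * C ≤ h x} := by
      ext x; exact ENNReal.le_div_iff_mul_le (Or.inl hC0) (Or.inl hCt)
    rw [ef, eg, eh]
    rcases lt_or_gt_of_ne hne with hlt | hgt
    · -- main case t < 1
      have hT1 : T < 1 := ENNReal.ofReal_lt_one.2 hlt
      have hFne : {x | T * c ≤ f x}.Nonempty := by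
        have h2 : T * c < c := by
          calc T * c < 1 * c := ENNReal.mul_lt_mul_left hc0 hsf hT1
            _ = c := one_mul c
        obtain ⟨x, hx⟩ := lt_iSup_iff.mp (hc ▸ h2 : T * c < ⨆ x, f x)
        exact ⟨x, hx.le⟩
      have hGne : {x | T * d ≤ g x}.Nonempty := by
        have h2 : T * d < d := by
          calc T * d < 1 * d := ENNReal.mul_lt_mul_left hd0 hsg hT1
            _ = d := one_mul d
        obtain ⟨x, hx⟩ := lt_iSup_iff.mp (hd ▸ h2 : T * d < ⨆ x, g x)
        exact ⟨x, hx.le⟩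
      have mFt : MeasurableSet {x | T * c ≤ f x} := mf measurableSet_Ici
      have mGt : MeasurableSet {x | T * d ≤ g x} := mg measurableSet_Ici
      have fFt : volume {x | T * c ≤ f x} ≠ ⊤ := by
        refine ((meas_ge_le_lintegral_div mf.aemeasurable
          (mul_ne_zero hT0 hc0) (ENNReal.mul_ne_top hTt hsf)).trans_lt
          (ENNReal.div_lt_top hif (mul_ne_zero hT0 hc0))).ne
      have fGt : volume {x | T * d ≤ g x} ≠ ⊤ := by
        refine ((meas_ge_le_lintegral_div mg.aemeasurable
          (mul_ne_zero hT0 hd0) (ENNReal.mul_ne_top hTt hsg)).trans_lt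
          (ENNReal.div_lt_top hig (mul_ne_zero hT0 hd0))).ne
      have hincl : (1-l) • {x | T * c ≤ f x} + l • {x | T * d ≤ g x}
          ⊆ {x | T * C ≤ h x} := by
        rintro z ⟨u, hu, v, hv, rfl⟩
        obtain ⟨x, hx, rfl⟩ := hu
        obtain ⟨y, hy, rfl⟩ := hv
        simp only [smul_eq_mul, Set.mem_setOf_eq]
        calc T * C = (T*c)^(1-l) * (T*d)^l := by
              rw [ENNReal.mul_rpow_of_nonneg _ _ h1l.le,
                ENNReal.mul_rpow_of_nonneg _ _ hl0.le, mul_mul_mul_comm,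
                ← ENNReal.rpow_add _ _ hT0 hTt]
              norm_num [hC]
          _ ≤ f x ^ (1-l) * g y ^ l :=
              mul_le_mul' (ENNReal.rpow_le_rpow hx h1l.le) (ENNReal.rpow_le_rpow hy hl0.le)
          _ ≤ h ((1-l)*x + l*y) := hyp x y
      exact bm1_scaled h1l hl0 hFne hGne mFt mGt fFt fGt hincl
    · -- case t > 1 : both superlevel sets are empty
      have hT1 : 1 < T := ENNReal.one_lt_ofReal.2 hgt
      have eF : {x | T * c ≤ f x} = ∅ := by
        refine Set.eq_empty_iff_forall_notMem.2 (fun x hx => ?_)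
        have h2 : c < T * c := by
          calc c = 1 * c := (one_mul c).symm
            _ < T * c := ENNReal.mul_lt_mul_left hc0 hsf hT1
        exact absurd (hx.trans (le_iSup f x)) (not_le.2 h2)
      have eG : {x | T * d ≤ g x} = ∅ := by
        refine Set.eq_empty_iff_forall_notMem.2 (fun x hx => ?_)
        have h2 : d < T * d := by
          calc d = 1 * d := (one_mul d).symm
            _ < T * d := ENNReal.mul_lt_mul_left hd0 hsg hT1
        exact absurd (hx.trans (le_iSup g x)) (not_le.2 h2)
      rw [eF, eG]
      simp
  -- measurability in t of superlevel volumes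
  have antiF : Antitone (fun t : ℝ => volume {x | ENNReal.ofReal t ≤ f' x}) :=
    fun s t hst => measure_mono (fun x hx => le_trans (ENNReal.ofReal_le_ofReal hst) hx)
  have antiG : Antitone (fun t : ℝ => volume {x | ENNReal.ofReal t ≤ g' x}) :=
    fun s t hst => measure_mono (fun x hx => le_trans (ENNReal.ofReal_le_ofReal hst) hx)
  -- a.e. comparison over Ioi 0
  have hone : ∀ᵐ t ∂(volume.restrict (Set.Ioi (0:ℝ))), t ≠ (1:ℝ) := by
    refine ae_iff.2 (le_antisymm ?_ bot_le)
    have : {t : ℝ | ¬ t ≠ 1} = {1} := by ext t; simp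
    rw [this]
    exact le_trans (Measure.restrict_le_self _) (le_of_eq (measure_singleton 1))
  have main : ENNReal.ofReal (1-l) * (∫⁻ x, f' x) + ENNReal.ofReal l * (∫⁻ x, g' x)
      ≤ ∫⁻ x, h' x := by
    rw [layercake f' mf' fif', layercake g' mg' fig', layercake h' mh' fih',
      ← lintegral_const_mul' _ _ ENNReal.ofReal_ne_top,
      ← lintegral_const_mul' _ _ ENNReal.ofReal_ne_top,
      ← lintegral_add_left]
    · refine lintegral_mono_ae ?_
      filter_upwards [ae_restrict_mem measurableSet_Ioi, hone] with t ht hne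
      exact key t ht hne
    · exact (antiF.measurable).const_mul _
  -- put everything together
  have hamgm : (∫⁻ x, f' x) ^ (1-l) * (∫⁻ x, g' x) ^ l ≤ ∫⁻ x, h' x :=
    le_trans (amgm2 hl0 hl1 _ _ fif' fig') main
  have hh2 : ∫⁻ x, h x = C * ∫⁻ x, h' x := by
    rw [ih', ENNReal.mul_div_cancel hC0 hCt]
  rw [hh2]
  calc (∫⁻ x, f x) ^ (1-l) * (∫⁻ x, g x) ^ l
      = (c^(1-l) * ((∫⁻ x, f x)/c)^(1-l)) * (d^l * ((∫⁻ x, g x)/d)^l) := by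
        rw [ENNReal.div_rpow_of_nonneg _ _ h1l.le, ENNReal.div_rpow_of_nonneg _ _ hl0.le,
          ENNReal.mul_div_cancel hcl0 hclt, ENNReal.mul_div_cancel hdl0 hdlt]
    _ = C * ((∫⁻ x, f' x) ^ (1-l) * (∫⁻ x, g' x) ^ l) := by
        rw [if', ig', hC]; ring
    _ ≤ C * ∫⁻ x, h' x := mul_le_mul_right hamgm C

theorem pl2 {l : ℝ} (hl0 : 0 < l) (hl1 : l < 1) (S T : Set (ℝ × ℝ))
    (hS : S.Nonempty) (hT : T.Nonempty) (cS : IsCompact S) (cT : IsCompact T) :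
    (volume S) ^ (1-l) * (volume T) ^ l ≤ volume ((1-l) • S + l • T) := by
  have h1l : (0:ℝ) < 1 - l := by linarith
  set W : Set (ℝ × ℝ) := (1-l) • S + l • T with hW
  have cW : IsCompact W := (cS.smul (1-l)).add (cT.smul l)
  set f : ℝ × ℝ → ℝ≥0∞ := S.indicator 1 with hf
  set g : ℝ × ℝ → ℝ≥0∞ := T.indicator 1 with hg
  set h : ℝ × ℝ → ℝ≥0∞ := W.indicator 1 with hh
  have mf : Measurable f := measurable_const.indicator cS.measurableSet
  have mg : Measurable g := measurable_const.indicator cT.measurableSet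
  have mh : Measurable h := measurable_const.indicator cW.measurableSet
  -- membership implication
  have hmem : ∀ p ∈ S, ∀ q ∈ T, ((1-l) * p.1 + l * q.1, (1-l) * p.2 + l * q.2) ∈ W := by
    intro p hp q hq
    refine ⟨(1-l) • p, Set.smul_mem_smul_set hp, l • q, Set.smul_mem_smul_set hq, ?_⟩
    simp [Prod.ext_iff, smul_eq_mul]
  -- pointwise hypothesis in 2D
  have hyp2 : ∀ p q : ℝ × ℝ, f p ^ (1-l) * g q ^ l
      ≤ h ((1-l) * p.1 + l * q.1, (1-l) * p.2 + l * q.2) := by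
    intro p q
    by_cases hp : p ∈ S
    · by_cases hq : q ∈ T
      · have := hmem p hp q hq
        simp [hf, hg, hh, indicator_of_mem, hp, hq, this]
      · simp [hg, indicator_of_notMem, hq, ENNReal.zero_rpow_of_pos hl0]
    · simp [hf, indicator_of_notMem, hp, ENNReal.zero_rpow_of_pos h1l]
  -- marginals
  set F : ℝ → ℝ≥0∞ := fun x₁ => ∫⁻ x₂, f (x₁, x₂) with hF
  set G : ℝ → ℝ≥0∞ := fun y₁ => ∫⁻ y₂, g (y₁, y₂) with hG
  set H : ℝ → ℝ≥0∞ := fun z₁ => ∫⁻ z₂, h (z₁, z₂) with hH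
  have mF : Measurable F := Measurable.lintegral_prod_right mf
  have mG : Measurable G := Measurable.lintegral_prod_right mg
  have mH : Measurable H := Measurable.lintegral_prod_right mh
  -- bounds on slices: integral of a slice of an indicator of a compact set
  have slice_bound : ∀ (A : Set (ℝ × ℝ)), IsCompact A → ∀ x₁ : ℝ,
      (∫⁻ x₂, A.indicator (1 : ℝ×ℝ → ℝ≥0∞) (x₁, x₂)) ≤ volume (Prod.snd '' A) := by
    intro A cA x₁
    have : ∀ x₂, A.indicator (1 : ℝ×ℝ → ℝ≥0∞) (x₁, x₂)
        ≤ (Prod.snd '' A).indicator (1 : ℝ → ℝ≥0∞) x₂ := by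
      intro x₂
      by_cases hx : (x₁, x₂) ∈ A
      · have : x₂ ∈ Prod.snd '' A := ⟨(x₁,x₂), hx, rfl⟩
        simp [indicator_of_mem, hx, this]
      · simp [indicator_of_notMem, hx]
    calc (∫⁻ x₂, A.indicator (1 : ℝ×ℝ → ℝ≥0∞) (x₁, x₂))
        ≤ ∫⁻ x₂, (Prod.snd '' A).indicator (1 : ℝ → ℝ≥0∞) x₂ := lintegral_mono this
      _ = volume (Prod.snd '' A) :=
          lintegral_indicator_one (cA.image continuous_snd).measurableSet
  have vol_snd_S : volume (Prod.snd '' S) ≠ ⊤ := (cS.image continuous_snd).measure_lt_top.ne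
  have vol_snd_T : volume (Prod.snd '' T) ≠ ⊤ := (cT.image continuous_snd).measure_lt_top.ne
  have vol_snd_W : volume (Prod.snd '' W) ≠ ⊤ := (cW.image continuous_snd).measure_lt_top.ne
  -- one-dimensional PL on slices gives the hypothesis for the marginals
  have hyp1 : ∀ x₁ y₁ : ℝ, F x₁ ^ (1-l) * G y₁ ^ l ≤ H ((1-l)*x₁ + l*y₁) := by
    intro x₁ y₁
    refine pl1 hl0 hl1 (fun x₂ => f (x₁, x₂)) (fun y₂ => g (y₁, y₂))
      (fun z₂ => h ((1-l)*x₁ + l*y₁, z₂)) (mf.comp (measurable_prodMk_left))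
      (mg.comp (measurable_prodMk_left)) (mh.comp (measurable_prodMk_left))
      ?_ ?_ ?_ ?_ ?_
    · refine ne_top_of_le_ne_top (by simp : (1:ℝ≥0∞) ≠ ⊤) (iSup_le fun x₂ => ?_)
      by_cases hx : (x₁, x₂) ∈ S <;> simp [hf, hx]
    · refine ne_top_of_le_ne_top (by simp : (1:ℝ≥0∞) ≠ ⊤) (iSup_le fun y₂ => ?_)
      by_cases hy : (y₁, y₂) ∈ T <;> simp [hg, hy]
    · exact ne_top_of_le_ne_top vol_snd_S (slice_bound S cS x₁)
    · exact ne_top_of_le_ne_top vol_snd_T (slice_bound T cT y₁)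
    · intro x₂ y₂
      exact hyp2 (x₁, x₂) (y₁, y₂)
  -- Fubini
  have fub : ∀ (φ : ℝ × ℝ → ℝ≥0∞), Measurable φ →
      (∫⁻ x₁, ∫⁻ x₂, φ (x₁, x₂)) = ∫⁻ p, φ p := by
    intro φ mφ
    rw [Measure.volume_eq_prod, lintegral_prod _ mφ.aemeasurable]
  have iF : ∫⁻ x₁, F x₁ = volume S := by
    rw [hF, fub f mf, hf, lintegral_indicator_one cS.measurableSet]
  have iG : ∫⁻ y₁, G y₁ = volume T := by
    rw [hG, fub g mg, hg, lintegral_indicator_one cT.measurableSet]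
  have iH : ∫⁻ z₁, H z₁ = volume W := by
    rw [hH, fub h mh, hh, lintegral_indicator_one cW.measurableSet]
  -- apply 1D PL to the marginals
  have final := pl1 hl0 hl1 F G H mF mG mH
    (ne_top_of_le_ne_top vol_snd_S (iSup_le (fun x₁ => slice_bound S cS x₁)))
    (ne_top_of_le_ne_top vol_snd_T (iSup_le (fun y₁ => slice_bound T cT y₁)))
    (iF ▸ cS.measure_lt_top.ne) (iG ▸ cT.measure_lt_top.ne) hyp1
  rw [iF, iG, iH] at final
  exact final

theorem vol_smul2 (r : ℝ) (hr : 0 ≤ r) (A : Set (ℝ × ℝ)) :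
    volume (r • A) = ENNReal.ofReal (r ^ 2) * volume A := by
  rw [Measure.addHaar_smul_of_nonneg _ hr]
  norm_num

theorem vadd_le_add_left (b₀ : ℝ × ℝ) (B A : Set (ℝ × ℝ)) (h : b₀ ∈ B) :
    volume A ≤ volume (A + B) := by
  calc volume A = volume (A + {b₀}) := by
        rw [Set.add_singleton]
        have e : (· + b₀) '' A = b₀ +ᵥ A := by
          show (· + b₀) '' A = (b₀ + ·) '' A
          exact image_congr (fun x _ => add_comm x b₀)
        rw [e, measure_vadd]
    _ ≤ volume (A + B) := measure_mono (Set.add_subset_add_left (by simpa using h))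

theorem vadd_le_add_right (a₀ : ℝ × ℝ) (B A : Set (ℝ × ℝ)) (h : a₀ ∈ A) :
    volume B ≤ volume (A + B) := by
  calc volume B = volume ({a₀} + B) := by
        rw [Set.singleton_add, show (a₀ + ·) '' B = a₀ +ᵥ B from rfl, measure_vadd]
    _ ≤ volume (A + B) := measure_mono (Set.add_subset_add_right (by simpa using h))

end BMaux

/-- Brunn–Minkowski inequality in the plane. -/
theorem stmt3 (A B : Set (ℝ × ℝ)) (hA : A.Nonempty) (hB : B.Nonempty)
    (hcA : IsCompact A) (hcB : IsCompact B) :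
    Real.sqrt (area (A + B)) ≥ Real.sqrt (area A) + Real.sqrt (area B) := by
  have hABt : volume (A + B) ≠ ⊤ := (hcA.add hcB).measure_lt_top.ne
  have hAt : volume A ≠ ⊤ := hcA.measure_lt_top.ne
  have hBt : volume B ≠ ⊤ := hcB.measure_lt_top.ne
  obtain ⟨a₀, ha₀⟩ := hA
  obtain ⟨b₀, hb₀⟩ := hB
  rw [ge_iff_le]
  rcases eq_or_ne (volume A) 0 with hA0 | hA0
  · have e : area A = 0 := by simp [area, hA0]
    rw [e, Real.sqrt_zero, zero_add]
    exact Real.sqrt_le_sqrt (ENNReal.toReal_mono hABt (vadd_le_add_right a₀ B A ha₀))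
  rcases eq_or_ne (volume B) 0 with hB0 | hB0
  · have e : area B = 0 := by simp [area, hB0]
    rw [e, Real.sqrt_zero, add_zero]
    exact Real.sqrt_le_sqrt (ENNReal.toReal_mono hABt (vadd_le_add_left b₀ B A hb₀))
  set a : ℝ := area A with haa
  set b : ℝ := area B with hbb
  have ha : 0 < a := ENNReal.toReal_pos hA0 hAt
  have hb : 0 < b := ENNReal.toReal_pos hB0 hBt
  set sa := Real.sqrt a with hsa'
  set sb := Real.sqrt b with hsb'
  have hsa : 0 < sa := Real.sqrt_pos.2 ha
  have hsb : 0 < sb := Real.sqrt_pos.2 hb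
  set m := sa + sb with hm
  have hmpos : 0 < m := by positivity
  set l : ℝ := sb / m with hl
  have hl0 : 0 < l := by positivity
  have hl1 : l < 1 := (div_lt_one hmpos).2 (by linarith)
  have h1l : 1 - l = sa / m := by
    rw [hl, hm]; field_simp; ring
  have h1lpos : (0:ℝ) < 1 - l := by linarith
  set S := (1-l)⁻¹ • A with hS
  set T := l⁻¹ • B with hT
  have key := pl2 hl0 hl1 S T (Set.Nonempty.smul_set ⟨a₀, ha₀⟩)
    (Set.Nonempty.smul_set ⟨b₀, hb₀⟩) (hcA.smul _) (hcB.smul _)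
  have hST : (1-l) • S + l • T = A + B := by
    rw [hS, hT, smul_inv_smul₀ h1lpos.ne' A, smul_inv_smul₀ hl0.ne' B]
  rw [hST] at key
  have hsaa : sa ^ 2 = a := Real.sq_sqrt ha.le
  have hsbb : sb ^ 2 = b := Real.sq_sqrt hb.le
  have hvS : (volume S).toReal = m ^ 2 := by
    rw [hS, vol_smul2 _ (by positivity), ENNReal.toReal_mul,
      ENNReal.toReal_ofReal (by positivity), h1l, inv_div, div_pow, hsaa]
    show m ^ 2 / a * a = m ^ 2
    field_simp
  have hvT : (volume T).toReal = m ^ 2 := by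
    rw [hT, vol_smul2 _ (by positivity), ENNReal.toReal_mul,
      ENNReal.toReal_ofReal (by positivity), hl, inv_div, div_pow, hsbb]
    show m ^ 2 / b * b = m ^ 2
    field_simp
  have h2 := ENNReal.toReal_mono hABt key
  rw [ENNReal.toReal_mul, ← ENNReal.toReal_rpow, ← ENNReal.toReal_rpow, hvS, hvT] at h2
  have main : m ^ 2 ≤ area (A + B) := by
    have hsum : (1 - l) + l = 1 := by ring
    calc m ^ 2 = (m ^ 2) ^ ((1-l) + l) := by rw [hsum, Real.rpow_one]
      _ = (m ^ 2) ^ (1-l) * (m ^ 2) ^ l := Real.rpow_add (by positivity) _ _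
      _ ≤ area (A + B) := h2
  calc sa + sb = Real.sqrt (m ^ 2) := by rw [Real.sqrt_sq hmpos.le]
    _ ≤ Real.sqrt (area (A + B)) := Real.sqrt_le_sqrt main
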